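/- There exists an absolute constant c > 0 such that for every integer k ≥ 2 the following holds. Set λ = √(log k / 3). Let J be a random variable uniformly distributed on {1, …, k}, and conditionally on J = i let Z be distributed according to N(λ e_i, I_k), the Gaussian measure on ℝ^k with mean λ e_i and identity covariance. Then for every measurable function Ψ : ℝ^k → {1, …, k}, the expected squared mean-estimation error satisfies E[‖λ e_{Ψ(Z)} − λ e_J‖^2] ≥ c · log k. -/

import Mathlib

open MeasureTheory ProbabilityTheory
open scoped ENNReal

/-- The standard Gaussian measure on `ℝ^k` (product of standard one-dimensional Gaussians). -/
noncomputable def stdGaussianPi (k : ℕ) : Measure (Fin k → ℝ) :=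
  Measure.pi fun _ => gaussianReal 0 1

/-- `N(m, I_k)`: the Gaussian measure on `ℝ^k` with mean `m` and identity covariance,
i.e. the pushforward of the standard Gaussian under translation by `m`. -/
noncomputable def gaussianPi (k : ℕ) (m : Fin k → ℝ) : Measure (Fin k → ℝ) :=
  (stdGaussianPi k).map (fun z => z + m)

/-- The `i`-th standard basis vector of `ℝ^k`, scaled by `lam`. -/
noncomputable def scaledBasis (k : ℕ) (lam : ℝ) (i : Fin k) : Fin k → ℝ :=
  fun j => if j = i then lam else 0

/-- The joint law of `(J, Z)` where `J` is uniform on `{1,…,k}` and, given `J = i`,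
`Z ∼ N(λ e_i, I_k)`. -/
noncomputable def jointLaw (k : ℕ) (lam : ℝ) : Measure (Fin k × (Fin k → ℝ)) :=
  (k : ℝ≥0∞)⁻¹ • ∑ i : Fin k,
    (Measure.dirac i).prod (gaussianPi k (scaledBasis k lam i))

open Real

variable {k : ℕ}

section Aux

variable {k : ℕ}

/-- One-coordinate Fubini for a finite product of probability measures. -/
lemma lintegral_update_pi (μ : Fin k → Measure ℝ) [∀ i, IsProbabilityMeasure (μ i)]
    {f : (Fin k → ℝ) → ℝ≥0∞} (hf : Measurable f) (i : Fin k) :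
    ∫⁻ z, f z ∂Measure.pi μ
      = ∫⁻ z, ∫⁻ t, f (Function.update z i t) ∂(μ i) ∂Measure.pi μ := by
  set g : (Fin k → ℝ) → ℝ≥0∞ := fun x => ∫⁻ t, f (Function.update x i t) ∂(μ i) with hg_def
  have hg : Measurable g := by
    apply Measurable.lintegral_prod_right (f := fun x t => f (Function.update x i t))
    exact hf.comp measurable_update'
  have hgu : ∀ x t, g (Function.update x i t) = g x := by
    intro x t
    simp only [hg_def, Function.update_idem]
  calc ∫⁻ z, f z ∂Measure.pi μ = (∫⋯∫⁻_Finset.univ, f ∂μ) 0 :=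
        lintegral_eq_lmarginal_univ 0
    _ = (∫⋯∫⁻_(Finset.univ.erase i), g ∂μ) 0 := by
        rw [lmarginal_erase' _ hf (Finset.mem_univ i)]
    _ = (∫⋯∫⁻_Finset.univ, g ∂μ) 0 := by
        rw [lmarginal_erase' _ hg (Finset.mem_univ i)]
        congr 1
        funext x
        simp [hgu]
    _ = ∫⁻ z, g z ∂Measure.pi μ := (lintegral_eq_lmarginal_univ 0).symm

lemma gaussianReal_eq_withDensity (c : ℝ) :
    gaussianReal c 1 = (gaussianReal 0 1).withDensity
      (fun x => ENNReal.ofReal (Real.exp (c * x - c ^ 2 / 2))) := by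
  rw [gaussianReal_of_var_ne_zero c one_ne_zero,
    gaussianReal_of_var_ne_zero 0 one_ne_zero,
    ← withDensity_mul _ (measurable_gaussianPDF _ _)
      (by exact (Real.measurable_exp.comp (by fun_prop)).ennreal_ofReal)]
  refine congrArg _ (funext fun x => ?_)
  rw [gaussianPDF_def, gaussianPDF_def, Pi.mul_apply, ← ENNReal.ofReal_mul (gaussianPDFReal_nonneg _ _ _)]
  congr 1
  simp only [gaussianPDFReal, NNReal.coe_one, mul_one, sub_zero]
  rw [mul_assoc, ← Real.exp_add]
  congr 1
  ring

lemma lintegral_exp_shift_gaussian (c : ℝ) :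
    ∫⁻ x, ENNReal.ofReal (Real.exp (c * x - c ^ 2 / 2)) ∂(gaussianReal 0 1) = 1 := by
  have h := gaussianReal_eq_withDensity c
  have : (gaussianReal c 1) Set.univ = 1 := measure_univ
  rwa [h, withDensity_apply _ MeasurableSet.univ, setLIntegral_univ] at this



instance (m : Fin k → ℝ) : IsProbabilityMeasure (gaussianPi k m) := by
  unfold gaussianPi stdGaussianPi
  exact Measure.isProbabilityMeasure_map (measurable_add_const m).aemeasurable

lemma gaussianPi_lintegral (c : ℝ) (i : Fin k) {f : (Fin k → ℝ) → ℝ≥0∞}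
    (hf : Measurable f) :
    ∫⁻ z, f z ∂(gaussianPi k (scaledBasis k c i))
      = ∫⁻ z, ENNReal.ofReal (Real.exp (c * z i - c ^ 2 / 2)) * f z ∂(stdGaussianPi k) := by
  have hupd : ∀ (z : Fin k → ℝ) (t : ℝ),
      Function.update z i t + scaledBasis k c i = Function.update z i (t + c) := by
    intro z t
    funext j
    by_cases hj : j = i
    · subst hj; simp [scaledBasis]
    · simp [scaledBasis, hj, Function.update_of_ne hj]
  have hmeas_shift : Measurable (fun z : Fin k → ℝ => f (z + scaledBasis k c i)) :=
    hf.comp (measurable_add_const _)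
  simp only [gaussianPi, stdGaussianPi]
  rw [lintegral_map hf (measurable_add_const _)]
  rw [lintegral_update_pi _ hmeas_shift i]
  have inner_eq : ∀ z : Fin k → ℝ,
      (∫⁻ t, f (Function.update z i t + scaledBasis k c i) ∂(gaussianReal 0 1))
        = ∫⁻ t, ENNReal.ofReal (Real.exp (c * t - c ^ 2 / 2)) * f (Function.update z i t)
            ∂(gaussianReal 0 1) := by
    intro z
    simp_rw [hupd]
    have h1 : ∫⁻ t, f (Function.update z i t) ∂((gaussianReal 0 1).map (· + c))
        = ∫⁻ t, f (Function.update z i (t + c)) ∂(gaussianReal 0 1) :=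
      lintegral_map (hf.comp (measurable_update z)) (measurable_add_const c)
    have h2 : ∫⁻ t, f (Function.update z i t)
          ∂((gaussianReal 0 1).withDensity
            (fun x => ENNReal.ofReal (Real.exp (c * x - c ^ 2 / 2))))
        = ∫⁻ t, ENNReal.ofReal (Real.exp (c * t - c ^ 2 / 2)) * f (Function.update z i t)
            ∂(gaussianReal 0 1) := by
      rw [lintegral_withDensity_eq_lintegral_mul (gaussianReal 0 1)
        (f := fun x => ENNReal.ofReal (Real.exp (c * x - c ^ 2 / 2)))
        (g := fun t => f (Function.update z i t))
        (by exact ((measurable_const.mul measurable_id).sub measurable_const).exp.ennreal_ofReal)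
        (by exact hf.comp (measurable_update z))]
      rfl
    rw [← h1, gaussianReal_map_add_const, zero_add, gaussianReal_eq_withDensity c, h2]
  simp_rw [inner_eq]
  have := lintegral_update_pi (fun _ => gaussianReal 0 1)
    (f := fun z => ENNReal.ofReal (Real.exp (c * z i - c ^ 2 / 2)) * f z) ?_ i
  · rw [this]
    congr 1
    funext z
    congr 1
    funext t
    rw [Function.update_self]
  · exact ((Real.measurable_exp.comp (by fun_prop)).ennreal_ofReal).mul hf

/-- Marginal: the lintegral over the standard Gaussian pi measure of a function of one
coordinate. -/
lemma stdGaussianPi_lintegral_coord (i : Fin k) {h : ℝ → ℝ≥0∞} (hh : Measurable h) :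
    ∫⁻ z, h (z i) ∂(stdGaussianPi k) = ∫⁻ t, h t ∂(gaussianReal 0 1) := by
  rw [stdGaussianPi, lintegral_update_pi (fun _ => gaussianReal 0 1)
    (f := fun z => h (z i)) (by exact hh.comp (measurable_pi_apply i)) i]
  have : ∀ z : Fin k → ℝ,
      (∫⁻ t, h (Function.update z i t i) ∂(gaussianReal 0 1))
        = ∫⁻ t, h t ∂(gaussianReal 0 1) := by
    intro z; simp_rw [Function.update_self]
  simp_rw [this]
  rw [lintegral_const]
  simp

/-- Second moment of the shift density. -/
lemma sq_density_lintegral (c : ℝ) (i : Fin k) :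
    ∫⁻ z, (ENNReal.ofReal (Real.exp (c * z i - c ^ 2 / 2))) ^ (2:ℝ) ∂(stdGaussianPi k)
      = ENNReal.ofReal (Real.exp (c ^ 2)) := by
  have hpt : ∀ t : ℝ, (ENNReal.ofReal (Real.exp (c * t - c ^ 2 / 2))) ^ (2:ℝ)
      = ENNReal.ofReal (Real.exp (c ^ 2))
        * ENNReal.ofReal (Real.exp ((2*c) * t - (2*c) ^ 2 / 2)) := by
    intro t
    rw [ENNReal.ofReal_rpow_of_pos (Real.exp_pos _), ← Real.exp_mul,
      ← ENNReal.ofReal_mul (Real.exp_pos _).le, ← Real.exp_add]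
    congr 2
    ring
  simp_rw [hpt]
  rw [lintegral_const_mul _ (by
    exact ((measurable_const.mul (measurable_pi_apply i)).sub measurable_const).exp.ennreal_ofReal)]
  rw [stdGaussianPi_lintegral_coord i
    (h := fun t => ENNReal.ofReal (Real.exp ((2*c) * t - (2*c) ^ 2 / 2))) (by
    exact ((measurable_const.mul measurable_id).sub measurable_const).exp.ennreal_ofReal),
    lintegral_exp_shift_gaussian, mul_one]

/-- Cauchy–Schwarz bound on shifted Gaussian measure of a set. -/
lemma gaussianPi_measure_le (c : ℝ) (i : Fin k) {A : Set (Fin k → ℝ)}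
    (hA : MeasurableSet A) :
    gaussianPi k (scaledBasis k c i) A
      ≤ ENNReal.ofReal (Real.exp (c ^ 2 / 2)) * (stdGaussianPi k A) ^ (1/2 : ℝ) := by
  have hind : Measurable (A.indicator (1 : (Fin k → ℝ) → ℝ≥0∞)) :=
    measurable_one.indicator hA
  have h1 : gaussianPi k (scaledBasis k c i) A
      = ∫⁻ z, ENNReal.ofReal (Real.exp (c * z i - c ^ 2 / 2))
          * A.indicator 1 z ∂(stdGaussianPi k) := by
    rw [← gaussianPi_lintegral c i hind, lintegral_indicator_one hA]
  rw [h1]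
  have hG : Measurable (fun z : Fin k → ℝ =>
      ENNReal.ofReal (Real.exp (c * z i - c ^ 2 / 2))) := by
    exact ((measurable_const.mul (measurable_pi_apply i)).sub measurable_const).exp.ennreal_ofReal
  have hconj : Real.HolderConjugate 2 2 := Real.HolderConjugate.two_two
  have hcs := ENNReal.lintegral_mul_le_Lp_mul_Lq (stdGaussianPi k)
    hconj hG.aemeasurable hind.aemeasurable
  simp only [Pi.mul_apply] at hcs
  have hFsq : ∀ z, (A.indicator (1 : (Fin k → ℝ) → ℝ≥0∞) z) ^ (2:ℝ)
      = A.indicator 1 z := by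
    intro z
    by_cases hz : z ∈ A <;> simp [hz, ENNReal.rpow_two]
  calc (∫⁻ z, ENNReal.ofReal (Real.exp (c * z i - c ^ 2 / 2)) * A.indicator 1 z
        ∂(stdGaussianPi k))
      ≤ (∫⁻ z, (ENNReal.ofReal (Real.exp (c * z i - c ^ 2 / 2))) ^ (2:ℝ) ∂(stdGaussianPi k))
          ^ (1/(2:ℝ))
        * (∫⁻ z, (A.indicator (1 : (Fin k → ℝ) → ℝ≥0∞) z) ^ (2:ℝ) ∂(stdGaussianPi k))
          ^ (1/(2:ℝ)) := hcs
    _ = ENNReal.ofReal (Real.exp (c ^ 2 / 2)) * (stdGaussianPi k A) ^ (1/2 : ℝ) := by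
        simp_rw [hFsq]
        rw [sq_density_lintegral, lintegral_indicator_one hA]
        congr 1
        rw [ENNReal.ofReal_rpow_of_pos (Real.exp_pos _), ← Real.exp_mul]
        congr 2
        ring

instance instProbStdGaussianPi : IsProbabilityMeasure (stdGaussianPi k) := by
  unfold stdGaussianPi; infer_instance


lemma sum_sq_scaledBasis (lam : ℝ) (a b : Fin k) :
    ∑ j, (scaledBasis k lam a j - scaledBasis k lam b j) ^ 2
      = if a = b then 0 else 2 * lam ^ 2 := by
  by_cases hab : a = b
  · simp [hab]
  · have hterm : ∀ j, (scaledBasis k lam a j - scaledBasis k lam b j) ^ 2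
        = (if j = a then lam ^ 2 else 0) + (if j = b then lam ^ 2 else 0) := by
      intro j
      by_cases ja : j = a <;> by_cases jb : j = b
      · exact absurd (ja.symm.trans jb) hab
      · simp [scaledBasis, ja, jb, hab, Ne.symm hab]
      · simp [scaledBasis, ja, jb, hab, Ne.symm hab]
      · simp [scaledBasis, ja, jb, hab, Ne.symm hab]
    rw [Finset.sum_congr rfl fun j _ => hterm j, Finset.sum_add_distrib]
    simp [hab]
    ring

lemma jointLaw_isProbability (hk : k ≠ 0) (lam : ℝ) :
    IsProbabilityMeasure (jointLaw k lam) := by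
  constructor
  rw [jointLaw, Measure.smul_apply, Measure.finset_sum_apply]
  simp only [measure_univ]
  simp only [Finset.sum_const, Finset.card_univ, Fintype.card_fin, nsmul_eq_mul, mul_one,
    smul_eq_mul]
  rw [ENNReal.inv_mul_cancel (by exact_mod_cast hk) (by simp)]

/-- Information-theoretic lower bound for mean estimation. -/
theorem stmt_10 :
    ∃ c : ℝ, 0 < c ∧ ∀ k : ℕ, 2 ≤ k →
      ∀ Ψ : (Fin k → ℝ) → Fin k, Measurable Ψ →
        c * Real.log k ≤
          ∫ p, (∑ j, (scaledBasis k (Real.sqrt (Real.log k / 3)) (Ψ p.2) j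
              - scaledBasis k (Real.sqrt (Real.log k / 3)) p.1 j) ^ 2)
            ∂(jointLaw k (Real.sqrt (Real.log k / 3))) := by
  set δ : ℝ := (2:ℝ) ^ (-(1/3) : ℝ) with hδ
  have hδ1 : δ < 1 := Real.rpow_lt_one_of_one_lt_of_neg one_lt_two (by norm_num)
  have hδ0 : 0 < δ := Real.rpow_pos_of_pos two_pos _
  refine ⟨2/3 * (1 - δ), by nlinarith, ?_⟩
  intro k hk Ψ hΨ
  set lam : ℝ := Real.sqrt (Real.log k / 3) with hlam
  have hk0 : (0:ℝ) < k := by positivity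
  have hk1 : (1:ℝ) ≤ k := by exact_mod_cast Nat.one_le_of_lt hk
  have hlogk : 0 ≤ Real.log k := Real.log_nonneg hk1
  have hlam2 : lam ^ 2 = Real.log k / 3 := Real.sq_sqrt (by positivity)
  haveI : IsProbabilityMeasure (jointLaw k lam) :=
    jointLaw_isProbability (by omega) lam
  -- the "success" set
  set S : Set (Fin k × (Fin k → ℝ)) := {p | Ψ p.2 = p.1} with hS
  have hSmeas : MeasurableSet S := by
    have : S = ⋃ i : Fin k, (Prod.fst ⁻¹' {i}) ∩ (Prod.snd ⁻¹' (Ψ ⁻¹' {i})) := by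
      ext p
      simp only [hS, Set.mem_setOf_eq, Set.mem_iUnion, Set.mem_inter_iff, Set.mem_preimage,
        Set.mem_singleton_iff]
      constructor
      · intro h; exact ⟨p.1, rfl, h⟩
      · rintro ⟨i, h1, h2⟩; rw [h1]; exact h2
    rw [this]
    exact MeasurableSet.iUnion fun i =>
      ((measurableSet_singleton i).preimage measurable_fst).inter
        ((hΨ (measurableSet_singleton i)).preimage measurable_snd)
  -- integrand is an indicator
  have hintegrand : ∀ p : Fin k × (Fin k → ℝ),
      (∑ j, (scaledBasis k lam (Ψ p.2) j - scaledBasis k lam p.1 j) ^ 2)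
        = Sᶜ.indicator (fun _ => 2 * lam ^ 2) p := by
    intro p
    rw [sum_sq_scaledBasis]
    by_cases hp : Ψ p.2 = p.1
    · simp [hp, hS, Set.indicator_of_notMem, hp]
    · simp [hp, hS, Set.indicator_of_mem, hp]
  rw [integral_congr_ae (Filter.Eventually.of_forall hintegrand),
    integral_indicator_const _ hSmeas.compl]
  -- bound the success probability
  set Q := stdGaussianPi k
  set A : Fin k → Set (Fin k → ℝ) := fun i => Ψ ⁻¹' {i} with hA
  have hAmeas : ∀ i, MeasurableSet (A i) := fun i => hΨ (measurableSet_singleton i)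
  have hmeasS : jointLaw k lam S = (k : ℝ≥0∞)⁻¹ * ∑ i : Fin k,
      gaussianPi k (scaledBasis k lam i) (A i) := by
    rw [jointLaw, Measure.smul_apply, Measure.finset_sum_apply, smul_eq_mul]
    congr 1
    refine Finset.sum_congr rfl fun i _ => ?_
    rw [Measure.dirac_prod, Measure.map_apply measurable_prodMk_left hSmeas]
    rfl
  -- the sets A i partition the space
  have hQA_sum : ∑ i : Fin k, Q (A i) = 1 := by
    have hdisj : Pairwise (Function.onFun Disjoint A) := by
      intro i j hij
      simp only [hA, Function.onFun]
      refine Set.disjoint_left.2 fun z hzi hzj => ?_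
      simp only [Set.mem_preimage, Set.mem_singleton_iff] at hzi hzj
      exact hij (hzi ▸ hzj ▸ rfl)
    have hunion : (⋃ i, A i) = Set.univ := by
      ext z; simp [hA]
    have := measure_iUnion (μ := Q) hdisj hAmeas
    rw [hunion, measure_univ, tsum_fintype] at this
    exact this.symm
  set q : Fin k → ℝ := fun i => (Q (A i)).toReal with hq
  have hq_nonneg : ∀ i, 0 ≤ q i := fun i => ENNReal.toReal_nonneg
  have hq_sum : ∑ i : Fin k, q i = 1 := by
    rw [hq, ← ENNReal.toReal_sum (fun i _ => measure_ne_top Q (A i)), hQA_sum,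
      ENNReal.toReal_one]
  -- per-index bound
  have hsi : ∀ i : Fin k, (gaussianPi k (scaledBasis k lam i) (A i)).toReal
      ≤ Real.exp (lam ^ 2 / 2) * Real.sqrt (q i) := by
    intro i
    have h := gaussianPi_measure_le lam i (hAmeas i)
    have hne : ENNReal.ofReal (Real.exp (lam ^ 2 / 2)) * (Q (A i)) ^ (1/2 : ℝ) ≠ ⊤ := by
      apply ENNReal.mul_ne_top ENNReal.ofReal_ne_top
      exact ENNReal.rpow_ne_top_of_nonneg (by norm_num) (measure_ne_top Q (A i))
    have := ENNReal.toReal_mono hne h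
    rwa [ENNReal.toReal_mul, ENNReal.toReal_ofReal (Real.exp_nonneg _),
      ← ENNReal.toReal_rpow, ← Real.sqrt_eq_rpow] at this
  -- sum of square roots bound
  have hsqrt_sum : ∑ i : Fin k, Real.sqrt (q i) ≤ Real.sqrt k := by
    have hcs := Finset.sum_mul_sq_le_sq_mul_sq Finset.univ
      (fun i : Fin k => Real.sqrt (q i)) (fun _ => (1:ℝ))
    simp only [mul_one, one_pow, Finset.sum_const, Finset.card_univ, Fintype.card_fin,
      nsmul_eq_mul, Real.sq_sqrt (hq_nonneg _)] at hcs
    rw [hq_sum] at hcs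
    calc ∑ i : Fin k, Real.sqrt (q i)
        = Real.sqrt ((∑ i : Fin k, Real.sqrt (q i)) ^ 2) :=
          (Real.sqrt_sq (Finset.sum_nonneg fun i _ => Real.sqrt_nonneg _)).symm
      _ ≤ Real.sqrt k := Real.sqrt_le_sqrt (by linarith)
  -- success probability bound
  have hsucc : (jointLaw k lam S).toReal ≤ δ := by
    have htom : (jointLaw k lam S).toReal
        = (k:ℝ)⁻¹ * ∑ i : Fin k, (gaussianPi k (scaledBasis k lam i) (A i)).toReal := by
      rw [hmeasS, ENNReal.toReal_mul, ENNReal.toReal_inv,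
        ENNReal.toReal_sum (fun i _ => measure_ne_top _ _)]
      simp
    have hsum_le : ∑ i : Fin k, (gaussianPi k (scaledBasis k lam i) (A i)).toReal
        ≤ Real.exp (lam ^ 2 / 2) * Real.sqrt k := by
      calc ∑ i : Fin k, (gaussianPi k (scaledBasis k lam i) (A i)).toReal
          ≤ ∑ i : Fin k, Real.exp (lam ^ 2 / 2) * Real.sqrt (q i) :=
            Finset.sum_le_sum fun i _ => hsi i
        _ = Real.exp (lam ^ 2 / 2) * ∑ i : Fin k, Real.sqrt (q i) := by
            rw [Finset.mul_sum]
        _ ≤ Real.exp (lam ^ 2 / 2) * Real.sqrt k := by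
            exact mul_le_mul_of_nonneg_left hsqrt_sum (Real.exp_nonneg _)
    have hexp : Real.exp (lam ^ 2 / 2) = (k:ℝ) ^ ((1:ℝ)/6) := by
      rw [Real.rpow_def_of_pos hk0, hlam2]
      congr 1
      ring
    have hsqrtk : Real.sqrt k = (k:ℝ) ^ ((1:ℝ)/2) := Real.sqrt_eq_rpow _
    have hkinv : (k:ℝ)⁻¹ = (k:ℝ) ^ (-1:ℝ) := (Real.rpow_neg_one _).symm
    have hprod : (k:ℝ)⁻¹ * (Real.exp (lam ^ 2 / 2) * Real.sqrt k)
        = (k:ℝ) ^ (-(1:ℝ)/3) := by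
      rw [hexp, hsqrtk, hkinv, ← Real.rpow_add hk0, ← Real.rpow_add hk0]
      norm_num
    have hk2 : (2:ℝ) ≤ k := by exact_mod_cast hk
    have hrpow_le : (k:ℝ) ^ (-(1:ℝ)/3) ≤ δ := by
      rw [hδ]
      have h1 : (-(1:ℝ)/3) = -(1/3 : ℝ) := by norm_num
      rw [h1, Real.rpow_neg hk0.le, Real.rpow_neg (by norm_num : (0:ℝ) ≤ 2)]
      exact inv_anti₀ (Real.rpow_pos_of_pos two_pos _)
        (Real.rpow_le_rpow (by norm_num) hk2 (by norm_num))
    calc (jointLaw k lam S).toReal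
        = (k:ℝ)⁻¹ * ∑ i : Fin k, (gaussianPi k (scaledBasis k lam i) (A i)).toReal := htom
      _ ≤ (k:ℝ)⁻¹ * (Real.exp (lam ^ 2 / 2) * Real.sqrt k) := by
          exact mul_le_mul_of_nonneg_left hsum_le (by positivity)
      _ = (k:ℝ) ^ (-(1:ℝ)/3) := hprod
      _ ≤ δ := hrpow_le
  -- error probability lower bound
  have hadd : (jointLaw k lam S).toReal + (jointLaw k lam Sᶜ).toReal = 1 := by
    have hmm := measure_add_measure_compl (μ := jointLaw k lam) hSmeas
    rw [measure_univ] at hmm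
    have h2 := congrArg ENNReal.toReal hmm
    rwa [ENNReal.toReal_add (measure_ne_top _ _) (measure_ne_top _ _),
      ENNReal.toReal_one] at h2
  have herr : 1 - δ ≤ (jointLaw k lam Sᶜ).toReal := by linarith
  rw [smul_eq_mul, hlam2]
  have hfin : (1 - δ) * (2 * (Real.log k / 3))
      ≤ (jointLaw k lam Sᶜ).toReal * (2 * (Real.log k / 3)) :=
    mul_le_mul_of_nonneg_right herr (by positivity)
  nlinarith [hfin, hlogk, measureReal_def (jointLaw k lam) Sᶜ]
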